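/- Fix an integer d ≥ 1 and real phases β_0, α_1, β_1, …, α_d, β_d, and let P ∈ ℂ[x] with deg P ≤ 2d be a polynomial such that the single-qubit QSP product M(θ) := e^{−iβ_0 Z} · Π_{r=1}^{d} [ e^{i(θ/2)Y} e^{−iα_r Z} e^{−i(θ/2)Y} e^{−iβ_r Z} ] satisfies ⟨0|M(θ)|0⟩ = P(cos(θ/2)) for all θ. Define the generalized echo operators C_r := Ũ* (e^{−iα_r Z} ⊗ I) Ũ (e^{−iβ_r Z} ⊗ I) on ℂ² ⊗ ℂⁿ. Then for every unit vector ψ ∈ ℂⁿ, the QSP-OTOC value ⟨(|0⟩⊗ψ), (e^{−iβ_0 Z} ⊗ I) C_d ⋯ C_1 (|0⟩⊗ψ)⟩ equals Σ_{l=1}^{n} |α_l|² P(λ_l); i.e., the depth-d QSP-OTOC applies the polynomial P to each singular value of the truncated propagator A. -/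

import Mathlib

open Matrix Polynomial Finset

/-- The Pauli matrix `Y`. -/
noncomputable def pauliY : Matrix (Fin 2) (Fin 2) ℂ :=
  !![0, -Complex.I; Complex.I, 0]

/-- `e^{−i(θ/2)Y} = cos(θ/2)·I − i sin(θ/2)·Y`. -/
noncomputable def Ry (θ : ℝ) : Matrix (Fin 2) (Fin 2) ℂ :=
  (Real.cos (θ / 2) : ℂ) • (1 : Matrix (Fin 2) (Fin 2) ℂ)
    - (Complex.I * (Real.sin (θ / 2) : ℂ)) • pauliY

/-- `e^{−iαZ} = diag(e^{−iα}, e^{iα})`. -/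
noncomputable def Rz (α : ℝ) : Matrix (Fin 2) (Fin 2) ℂ :=
  !![Complex.exp (-(α : ℂ) * Complex.I), 0; 0, Complex.exp ((α : ℂ) * Complex.I)]

/-- The ordered product `term d * term (d-1) * ⋯ * term 1`
(the factor with `r = 1` rightmost, `r` increasing from right to left). -/
noncomputable def orderedProd {M : Type*} [Monoid M] (term : ℕ → M) : ℕ → M
  | 0 => 1
  | d + 1 => term (d + 1) * orderedProd term d

lemma Ry_eq (θ : ℝ) : Ry θ = !![(Real.cos (θ/2) : ℂ), -(Real.sin (θ/2):ℂ);
    (Real.sin (θ/2):ℂ), (Real.cos (θ/2):ℂ)] := by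
  ext i j
  fin_cases i <;> fin_cases j <;> simp [Ry, pauliY, Matrix.one_apply]
  · linear_combination Complex.sin ((θ:ℂ)/2) * Complex.I_sq
  · linear_combination -Complex.sin ((θ:ℂ)/2) * Complex.I_sq

lemma RyH_eq (θ : ℝ) : (Ry θ)ᴴ = !![(Real.cos (θ/2) : ℂ), (Real.sin (θ/2):ℂ);
    -(Real.sin (θ/2):ℂ), (Real.cos (θ/2):ℂ)] := by
  rw [Ry_eq]
  ext i j
  fin_cases i <;> fin_cases j <;>
    simp [Matrix.conjTranspose_apply, ← Complex.ofReal_cos, ← Complex.ofReal_sin,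
      Complex.conj_ofReal]

/-- The (unnormalized) two-dimensional representation of the qubitized walk. -/
noncomputable def Wm (c : ℂ) : Matrix (Fin 2) (Fin 2) ℂ := !![c, 1 - c^2; 1, -c]

lemma term_rel (θ : ℝ) (a b : ℝ) :
    (Wm (Real.cos (θ/2) : ℂ) * Rz a * Wm (Real.cos (θ/2) : ℂ) * Rz b) 0 0
      = ((Ry θ)ᴴ * Rz a * Ry θ * Rz b) 0 0 ∧
    (Wm (Real.cos (θ/2) : ℂ) * Rz a * Wm (Real.cos (θ/2) : ℂ) * Rz b) 0 1
      = -(Real.sin (θ/2) : ℂ) * ((Ry θ)ᴴ * Rz a * Ry θ * Rz b) 0 1 ∧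
    (Real.sin (θ/2) : ℂ) * (Wm (Real.cos (θ/2) : ℂ) * Rz a * Wm (Real.cos (θ/2) : ℂ) * Rz b) 1 0
      = -(((Ry θ)ᴴ * Rz a * Ry θ * Rz b) 1 0) ∧
    (Wm (Real.cos (θ/2) : ℂ) * Rz a * Wm (Real.cos (θ/2) : ℂ) * Rz b) 1 1
      = ((Ry θ)ᴴ * Rz a * Ry θ * Rz b) 1 1 := by
  have h := Real.sin_sq_add_cos_sq (θ/2)
  have hcs : ((Real.sin (θ/2) : ℂ))^2 + ((Real.cos (θ/2) : ℂ))^2 = 1 := by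
    rw [← Complex.ofReal_one, ← h]
    push_cast
    ring
  set c := (Real.cos (θ/2) : ℂ)
  set s := (Real.sin (θ/2) : ℂ)
  set ea := Complex.exp (-(a : ℂ) * Complex.I)
  set ea' := Complex.exp ((a : ℂ) * Complex.I)
  set eb := Complex.exp (-(b : ℂ) * Complex.I)
  set eb' := Complex.exp ((b : ℂ) * Complex.I)
  rw [RyH_eq, Ry_eq]
  refine ⟨?_, ?_, ?_, ?_⟩ <;>
    simp only [Wm, Rz, Matrix.mul_fin_two, Matrix.of_apply, Matrix.cons_val_zero,
      Matrix.cons_val_one, Matrix.head_cons, Matrix.head_fin_const, Matrix.cons_val',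
      Matrix.empty_val', Matrix.cons_val_fin_one]
  · linear_combination (-(ea' * eb)) * hcs
  · linear_combination (-c*(ea-ea')*eb') * hcs
  · ring
  · linear_combination (-(ea*eb')) * hcs

lemma prod_rel (θ : ℝ) (α β : ℕ → ℝ) : ∀ r : ℕ,
    (orderedProd (fun k => Wm (Real.cos (θ/2) : ℂ) * Rz (α k) * Wm (Real.cos (θ/2) : ℂ) * Rz (β k)) r) 0 0
      = (orderedProd (fun k => (Ry θ)ᴴ * Rz (α k) * Ry θ * Rz (β k)) r) 0 0 ∧
    (orderedProd (fun k => Wm (Real.cos (θ/2) : ℂ) * Rz (α k) * Wm (Real.cos (θ/2) : ℂ) * Rz (β k)) r) 0 1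
      = -(Real.sin (θ/2) : ℂ) * (orderedProd (fun k => (Ry θ)ᴴ * Rz (α k) * Ry θ * Rz (β k)) r) 0 1 ∧
    (Real.sin (θ/2) : ℂ) * (orderedProd (fun k => Wm (Real.cos (θ/2) : ℂ) * Rz (α k) * Wm (Real.cos (θ/2) : ℂ) * Rz (β k)) r) 1 0
      = -((orderedProd (fun k => (Ry θ)ᴴ * Rz (α k) * Ry θ * Rz (β k)) r) 1 0) ∧
    (orderedProd (fun k => Wm (Real.cos (θ/2) : ℂ) * Rz (α k) * Wm (Real.cos (θ/2) : ℂ) * Rz (β k)) r) 1 1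
      = (orderedProd (fun k => (Ry θ)ᴴ * Rz (α k) * Ry θ * Rz (β k)) r) 1 1 := by
  set c := (Real.cos (θ/2) : ℂ) with hc
  set s := (Real.sin (θ/2) : ℂ) with hs
  intro r
  induction r with
  | zero =>
      refine ⟨?_, ?_, ?_, ?_⟩ <;> simp [orderedProd, Matrix.one_apply]
  | succ r ih =>
      obtain ⟨ih1, ih2, ih3, ih4⟩ := ih
      obtain ⟨h1, h2, h3, h4⟩ := term_rel θ (α (r+1)) (β (r+1))
      set E := Wm c * Rz (α (r+1)) * Wm c * Rz (β (r+1)) with hE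
      set Mt := (Ry θ)ᴴ * Rz (α (r+1)) * Ry θ * Rz (β (r+1)) with hMt
      set Pm := orderedProd (fun k => Wm c * Rz (α k) * Wm c * Rz (β k)) r with hPm
      set Qm := orderedProd (fun k => (Ry θ)ᴴ * Rz (α k) * Ry θ * Rz (β k)) r with hQm
      refine ⟨?_, ?_, ?_, ?_⟩ <;>
        simp only [orderedProd, ← hE, ← hMt, ← hPm, ← hQm] <;>
        rw [Matrix.mul_apply, Matrix.mul_apply] <;>
        simp only [Fin.sum_univ_two]
      · linear_combination Pm 0 0 * h1 + Mt 0 0 * ih1 + Pm 1 0 * h2 - Mt 0 1 * ih3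
      · linear_combination Pm 0 1 * h1 + Mt 0 0 * ih2 + Pm 1 1 * h2 - s * Mt 0 1 * ih4
      · linear_combination Pm 0 0 * h3 - Mt 1 0 * ih1 + s * Pm 1 0 * h4 + Mt 1 1 * ih3
      · linear_combination E 1 0 * ih2 - Qm 0 1 * h3 + Pm 1 1 * h4 + Mt 1 1 * ih4

lemma Wm_Rz_prod (cq : ℂ) (a b : ℝ) :
    Wm cq * Rz a * Wm cq * Rz b =
    !![(cq^2 * Complex.exp (-(a:ℂ)*Complex.I) + (1-cq^2) * Complex.exp ((a:ℂ)*Complex.I))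
         * Complex.exp (-(b:ℂ)*Complex.I),
       cq*(1-cq^2)*(Complex.exp (-(a:ℂ)*Complex.I) - Complex.exp ((a:ℂ)*Complex.I))
         * Complex.exp ((b:ℂ)*Complex.I);
       cq*(Complex.exp (-(a:ℂ)*Complex.I) - Complex.exp ((a:ℂ)*Complex.I))
         * Complex.exp (-(b:ℂ)*Complex.I),
       ((1-cq^2) * Complex.exp (-(a:ℂ)*Complex.I) + cq^2 * Complex.exp ((a:ℂ)*Complex.I))
         * Complex.exp ((b:ℂ)*Complex.I)] := by
  simp only [Wm, Rz, Matrix.mul_fin_two]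
  ext i j
  fin_cases i <;> fin_cases j <;> simp <;> ring

/-- `A *ᵥ` commutes with finite sums of vectors. -/
lemma mulVec_sumv {m n : Type*} [Fintype n] [Fintype m] {ι : Type*} (s : Finset ι)
    (A : Matrix m n ℂ) (f : ι → (n → ℂ)) :
    A *ᵥ (∑ l ∈ s, f l) = ∑ l ∈ s, A *ᵥ f l := by
  ext p
  simp [Matrix.mulVec, dotProduct, Finset.sum_apply, Finset.mul_sum]
  rw [Finset.sum_comm]

lemma dotProduct_sumv {n : Type*} [Fintype n] {ι : Type*} (s : Finset ι)
    (u : n → ℂ) (f : ι → (n → ℂ)) :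
    u ⬝ᵥ (∑ l ∈ s, f l) = ∑ l ∈ s, u ⬝ᵥ f l := by
  simp [dotProduct, Finset.sum_apply, Finset.mul_sum]
  rw [Finset.sum_comm]

/-- **The depth-`d` QSP-OTOC applies the QSP polynomial `P` to each singular
value of the truncated propagator `A`:**
`⟨(|0⟩⊗ψ), (e^{−iβ_0 Z}⊗I) C_d ⋯ C_1 (|0⟩⊗ψ)⟩ = Σ_l |α_l|² P(λ_l)`. -/
theorem qsp_otoc_polynomial_transform
    (d : ℕ) (hd : 1 ≤ d) (β : ℕ → ℝ) (α : ℕ → ℝ)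
    (P : Polynomial ℂ) (hPdeg : P.natDegree ≤ 2 * d)
    (hP : ∀ θ : ℝ,
      (Rz (β 0) *
        orderedProd (fun r => (Ry θ)ᴴ * Rz (α r) * Ry θ * Rz (β r)) d) 0 0
        = P.eval ((Real.cos (θ / 2) : ℂ)))
    (n : ℕ) (hn : 1 ≤ n)
    (Ut : Matrix (Fin 2 × Fin n) (Fin 2 × Fin n) ℂ)
    (hUt : Ut ∈ Matrix.unitaryGroup (Fin 2 × Fin n) ℂ)
    (A : Matrix (Fin n) (Fin n) ℂ)
    (hA : ∀ a b : Fin n, A a b = Ut (0, a) (0, b))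
    -- `e^{−iγZ} ⊗ I` on the full space
    (RzI : ℝ → Matrix (Fin 2 × Fin n) (Fin 2 × Fin n) ℂ)
    (hRzI : ∀ (γ : ℝ) (p q : Fin 2 × Fin n),
      RzI γ p q = if p = q
        then (if p.1 = 0 then Complex.exp (-(γ : ℂ) * Complex.I)
              else Complex.exp ((γ : ℂ) * Complex.I))
        else 0)
    -- the generalized echo operators `C_r = Ũ* (e^{−iα_r Z}⊗I) Ũ (e^{−iβ_r Z}⊗I)`
    (Cecho : ℕ → Matrix (Fin 2 × Fin n) (Fin 2 × Fin n) ℂ)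
    (hCecho : ∀ r : ℕ, Cecho r = Utᴴ * RzI (α r) * Ut * RzI (β r))
    -- singular value decomposition of `A`
    (ψb φb : Fin n → (Fin n → ℂ))
    (hψb : ∀ l l' : Fin n, star (ψb l) ⬝ᵥ ψb l' = if l = l' then 1 else 0)
    (hφb : ∀ l l' : Fin n, star (φb l) ⬝ᵥ φb l' = if l = l' then 1 else 0)
    (lam : Fin n → ℝ)
    (hAφ : ∀ l : Fin n, A *ᵥ φb l = (lam l : ℂ) • ψb l)
    (hAψ : ∀ l : Fin n, Aᴴ *ᵥ ψb l = (lam l : ℂ) • φb l)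
    (hlam : ∀ l : Fin n, lam l ∈ Set.Icc (0 : ℝ) 1)
    -- reference unit vector and overlaps
    (ψ : Fin n → ℂ) (hψ : star ψ ⬝ᵥ ψ = 1)
    (v : Fin 2 × Fin n → ℂ)
    (hv : ∀ p : Fin 2 × Fin n, v p = if p.1 = 0 then ψ p.2 else 0)
    (ov : Fin n → ℂ) (hov : ∀ l : Fin n, ov l = star (φb l) ⬝ᵥ ψ) :
    star v ⬝ᵥ ((RzI (β 0) * orderedProd Cecho d) *ᵥ v)
      = ∑ l : Fin n, (‖ov l‖ ^ 2 : ℂ) * P.eval ((lam l : ℂ)) := by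
  classical
  -- angles
  set θl : Fin n → ℝ := fun l => 2 * Real.arccos (lam l) with hθl
  have hcosθ : ∀ l, Real.cos (θl l / 2) = lam l := by
    intro l
    have h2 : θl l / 2 = Real.arccos (lam l) := by
      rw [hθl]; ring
    rw [h2, Real.cos_arccos (by linarith [(hlam l).1]) (hlam l).2]
  -- scalar abbreviation
  set c : Fin n → ℂ := fun l => (lam l : ℂ) with hcdef
  -- basic vectors
  set f0 : Fin n → (Fin 2 × Fin n → ℂ) := fun l p => if p.1 = 0 then φb l p.2 else 0 with hf0
  set g0 : Fin n → (Fin 2 × Fin n → ℂ) := fun l p => if p.1 = 0 then ψb l p.2 else 0 with hg0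
  set g1 : Fin n → (Fin 2 × Fin n → ℂ) := fun l => Ut *ᵥ f0 l - c l • g0 l with hg1
  set f1 : Fin n → (Fin 2 × Fin n → ℂ) := fun l => Utᴴ *ᵥ g0 l - c l • f0 l with hf1
  -- unitarity
  have hU1 : Utᴴ * Ut = 1 := by
    have := (Matrix.mem_unitaryGroup_iff'.mp hUt)
    rwa [Matrix.star_eq_conjTranspose] at this
  have hU2 : Ut * Utᴴ = 1 := by
    have := (Matrix.mem_unitaryGroup_iff.mp hUt)
    rwa [Matrix.star_eq_conjTranspose] at this
  have hUv1 : ∀ x : Fin 2 × Fin n → ℂ, Utᴴ *ᵥ (Ut *ᵥ x) = x := by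
    intro x; rw [Matrix.mulVec_mulVec, hU1, Matrix.one_mulVec]
  have hUv2 : ∀ x : Fin 2 × Fin n → ℂ, Ut *ᵥ (Utᴴ *ᵥ x) = x := by
    intro x; rw [Matrix.mulVec_mulVec, hU2, Matrix.one_mulVec]
  -- action of RzI on vectors
  have hRv : ∀ (γ : ℝ) (x : Fin 2 × Fin n → ℂ) (p : Fin 2 × Fin n),
      (RzI γ *ᵥ x) p = (if p.1 = 0 then Complex.exp (-(γ:ℂ) * Complex.I)
        else Complex.exp ((γ:ℂ) * Complex.I)) * x p := by
    intro γ x p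
    simp [Matrix.mulVec, dotProduct, hRzI, ite_mul, zero_mul, Finset.sum_ite_eq]
  -- sector-0 supported vectors
  have hRzero : ∀ (γ : ℝ) (l : Fin n) (w : Fin 2 × Fin n → ℂ),
      (∀ p : Fin 2 × Fin n, p.1 ≠ 0 → w p = 0) →
      RzI γ *ᵥ w = Complex.exp (-(γ:ℂ) * Complex.I) • w := by
    intro γ l w hw
    funext p
    rw [hRv, Pi.smul_apply, smul_eq_mul]
    by_cases h : p.1 = 0
    · simp [h]
    · simp [h, hw p h]
  have hRone : ∀ (γ : ℝ) (w : Fin 2 × Fin n → ℂ),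
      (∀ b : Fin n, w (0, b) = 0) →
      RzI γ *ᵥ w = Complex.exp ((γ:ℂ) * Complex.I) • w := by
    intro γ w hw
    funext p
    rw [hRv, Pi.smul_apply, smul_eq_mul]
    obtain ⟨i, b⟩ := p
    by_cases h : i = 0
    · subst h; simp [hw b]
    · simp [h]
  -- support facts
  have hg1s : ∀ (l : Fin n) (b : Fin n), g1 l (0, b) = 0 := by
    intro l b
    have h1 : (Ut *ᵥ f0 l) (0, b) = (A *ᵥ φb l) b := by
      simp [Matrix.mulVec, dotProduct, Fintype.sum_prod_type, Fin.sum_univ_two, hf0, hA]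
    simp only [hg1, Pi.sub_apply, Pi.smul_apply, smul_eq_mul, h1, hAφ l]
    simp [hg0, hf0, hcdef]
  have hf1s : ∀ (l : Fin n) (b : Fin n), f1 l (0, b) = 0 := by
    intro l b
    have h1 : (Utᴴ *ᵥ g0 l) (0, b) = (Aᴴ *ᵥ ψb l) b := by
      simp [Matrix.mulVec, dotProduct, Fintype.sum_prod_type, Fin.sum_univ_two, hg0,
        Matrix.conjTranspose_apply, hA]
    simp only [hf1, Pi.sub_apply, Pi.smul_apply, smul_eq_mul, h1, hAψ l]
    simp [hg0, hf0, hcdef]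
  have hf0s : ∀ (l : Fin n) (p : Fin 2 × Fin n), p.1 ≠ 0 → f0 l p = 0 := by
    intro l p hp; simp [hf0, hp]
  have hg0s : ∀ (l : Fin n) (p : Fin 2 × Fin n), p.1 ≠ 0 → g0 l p = 0 := by
    intro l p hp; simp [hg0, hp]
  -- RzI eigen-actions
  have hRf0 : ∀ (γ : ℝ) (l : Fin n),
      RzI γ *ᵥ f0 l = Complex.exp (-(γ:ℂ) * Complex.I) • f0 l := fun γ l =>
    hRzero γ l (f0 l) (hf0s l)
  have hRg0 : ∀ (γ : ℝ) (l : Fin n),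
      RzI γ *ᵥ g0 l = Complex.exp (-(γ:ℂ) * Complex.I) • g0 l := fun γ l =>
    hRzero γ l (g0 l) (hg0s l)
  have hRf1 : ∀ (γ : ℝ) (l : Fin n),
      RzI γ *ᵥ f1 l = Complex.exp ((γ:ℂ) * Complex.I) • f1 l := fun γ l =>
    hRone γ (f1 l) (hf1s l)
  have hRg1 : ∀ (γ : ℝ) (l : Fin n),
      RzI γ *ᵥ g1 l = Complex.exp ((γ:ℂ) * Complex.I) • g1 l := fun γ l =>
    hRone γ (g1 l) (hg1s l)
  -- Ut actions
  have hUf0 : ∀ l, Ut *ᵥ f0 l = c l • g0 l + g1 l := by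
    intro l
    rw [hg1]
    funext p
    simp only [Pi.add_apply, Pi.sub_apply, Pi.smul_apply, smul_eq_mul]
    ring
  have hUHg0 : ∀ l, Utᴴ *ᵥ g0 l = c l • f0 l + f1 l := by
    intro l
    rw [hf1]
    funext p
    simp only [Pi.add_apply, Pi.sub_apply, Pi.smul_apply, smul_eq_mul]
    ring
  have hUf1 : ∀ l, Ut *ᵥ f1 l = (1 - c l ^ 2) • g0 l - c l • g1 l := by
    intro l
    rw [hf1, Matrix.mulVec_sub, Matrix.mulVec_smul, hUv2, hUf0, hg1]
    funext p
    simp only [Pi.sub_apply, Pi.add_apply, Pi.smul_apply, smul_eq_mul]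
    ring
  have hUHg1 : ∀ l, Utᴴ *ᵥ g1 l = (1 - c l ^ 2) • f0 l - c l • f1 l := by
    intro l
    rw [hg1, Matrix.mulVec_sub, Matrix.mulVec_smul, hUv1, hUHg0, hf1]
    funext p
    simp only [Pi.sub_apply, Pi.add_apply, Pi.smul_apply, smul_eq_mul]
    ring
  -- action of the echo operator on the invariant plane
  have hCact : ∀ (r : ℕ) (l : Fin n) (aq bq : ℂ),
      Cecho r *ᵥ (aq • f0 l + bq • f1 l)
        = ((Wm (c l) * Rz (α r) * Wm (c l) * Rz (β r)) 0 0 * aq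
            + (Wm (c l) * Rz (α r) * Wm (c l) * Rz (β r)) 0 1 * bq) • f0 l
          + ((Wm (c l) * Rz (α r) * Wm (c l) * Rz (β r)) 1 0 * aq
            + (Wm (c l) * Rz (α r) * Wm (c l) * Rz (β r)) 1 1 * bq) • f1 l := by
    intro r l aq bq
    have hstep : Cecho r *ᵥ (aq • f0 l + bq • f1 l)
        = Utᴴ *ᵥ (RzI (α r) *ᵥ (Ut *ᵥ (RzI (β r) *ᵥ (aq • f0 l + bq • f1 l)))) := by
      rw [hCecho r, Matrix.mulVec_mulVec, Matrix.mulVec_mulVec, Matrix.mulVec_mulVec]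
    rw [hstep]
    simp only [Matrix.mulVec_add, Matrix.mulVec_sub, Matrix.mulVec_smul,
      hRf0, hRf1, hRg0, hRg1, hUf0, hUf1, hUHg0, hUHg1, smul_add, smul_sub]
    rw [Wm_Rz_prod]
    funext p
    simp only [Pi.add_apply, Pi.sub_apply, Pi.smul_apply, smul_eq_mul,
      Matrix.cons_val', Matrix.cons_val_zero, Matrix.cons_val_one, Matrix.head_cons,
      Matrix.empty_val', Matrix.cons_val_fin_one, Matrix.head_fin_const, Matrix.of_apply]
    ring
  -- main invariant: action of the ordered product of echoes
  have hkey : ∀ (l : Fin n) (r : ℕ),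
      orderedProd Cecho r *ᵥ f0 l
        = ((orderedProd (fun k => Wm (c l) * Rz (α k) * Wm (c l) * Rz (β k)) r) 0 0) • f0 l
          + ((orderedProd (fun k => Wm (c l) * Rz (α k) * Wm (c l) * Rz (β k)) r) 1 0) • f1 l := by
    intro l r
    induction r with
    | zero =>
        simp [orderedProd, Matrix.one_mulVec, Matrix.one_apply]
    | succ r ih =>
        have h1 : orderedProd Cecho (r+1) *ᵥ f0 l
            = Cecho (r+1) *ᵥ (orderedProd Cecho r *ᵥ f0 l) := by
          rw [Matrix.mulVec_mulVec]; rfl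
        rw [h1, ih, hCact]
        funext p
        simp only [orderedProd, Matrix.mul_apply, Fin.sum_univ_two, Pi.add_apply,
          Pi.smul_apply, smul_eq_mul]
  -- expansion of ψ in the φ basis
  have hcomplete : ∀ a b : Fin n, (∑ l : Fin n, (starRingEnd ℂ) (φb l a) * φb l b)
      = if a = b then 1 else 0 := by
    intro a b
    set Φ : Matrix (Fin n) (Fin n) ℂ := Matrix.of (fun l a => φb l a) with hΦ
    have h1 : Φ * Φᴴ = 1 := by
      ext l l'
      have hh := hφb l' l
      simp only [dotProduct, Pi.star_apply, RCLike.star_def] at hh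
      simp only [Matrix.mul_apply, Matrix.conjTranspose_apply, hΦ, Matrix.of_apply,
        Matrix.one_apply, RCLike.star_def]
      rw [show ∑ x, φb l x * (starRingEnd ℂ) (φb l' x)
          = ∑ x, (starRingEnd ℂ) (φb l' x) * φb l x from
        Finset.sum_congr rfl (fun x _ => mul_comm _ _), hh]
      by_cases h : l = l'
      · simp [h]
      · rw [if_neg (fun hh' => h hh'.symm), if_neg h]
    have h2 : Φᴴ * Φ = 1 := mul_eq_one_comm.mp h1
    have h3 := congrFun (congrFun h2 a) b
    simp only [Matrix.mul_apply, Matrix.conjTranspose_apply, hΦ, Matrix.of_apply,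
      Matrix.one_apply, RCLike.star_def] at h3
    exact h3
  have hψexp : ∀ a : Fin n, ψ a = ∑ l : Fin n, ov l * φb l a := by
    intro a
    have hterm : ∀ l : Fin n, ov l * φb l a
        = ∑ b : Fin n, ((starRingEnd ℂ) (φb l b) * φb l a) * ψ b := by
      intro l
      rw [hov l]
      simp only [dotProduct, Pi.star_apply, RCLike.star_def, Finset.sum_mul]
      exact Finset.sum_congr rfl (fun b _ => by ring)
    have hstep : ∑ l : Fin n, ov l * φb l a
        = ∑ b : Fin n, (if b = a then (1:ℂ) else 0) * ψ b := by
      rw [Finset.sum_congr rfl (fun l _ => hterm l), Finset.sum_comm]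
      refine Finset.sum_congr rfl (fun b _ => ?_)
      rw [← Finset.sum_mul, hcomplete b a]
    rw [hstep]
    simp [ite_mul, Finset.sum_ite_eq']
  have hvsum : v = ∑ l : Fin n, ov l • f0 l := by
    funext p
    rw [hv p]
    simp only [Finset.sum_apply, Pi.smul_apply, smul_eq_mul, hf0]
    by_cases h : p.1 = 0
    · simp only [h, if_true, mul_ite, mul_zero]
      simp [hψexp p.2]
    · simp [h]
  -- inner products
  have hvf0 : ∀ l, star v ⬝ᵥ f0 l = (starRingEnd ℂ) (ov l) := by
    intro l
    simp only [dotProduct, Pi.star_apply, RCLike.star_def, Fintype.sum_prod_type,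
      Fin.sum_univ_two]
    rw [hov l]
    simp only [dotProduct, Pi.star_apply, RCLike.star_def, map_sum, _root_.map_mul,
      Complex.conj_conj]
    simp [hf0, hv]
    apply Finset.sum_congr rfl
    intro b _
    ring
  have hvf1 : ∀ l, star v ⬝ᵥ f1 l = 0 := by
    intro l
    simp only [dotProduct, Pi.star_apply, Fintype.sum_prod_type, Fin.sum_univ_two]
    rw [Finset.sum_eq_zero, Finset.sum_eq_zero, add_zero]
    · intro b _
      simp [hv]
    · intro b _
      rw [hf1s l b, mul_zero]
  -- final computation
  have hM : ∀ l, (RzI (β 0) * orderedProd Cecho d) *ᵥ f0 l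
      = (Complex.exp (-(β 0 : ℂ) * Complex.I)
          * (orderedProd (fun k => Wm (c l) * Rz (α k) * Wm (c l) * Rz (β k)) d) 0 0) • f0 l
        + (Complex.exp ((β 0 : ℂ) * Complex.I)
          * (orderedProd (fun k => Wm (c l) * Rz (α k) * Wm (c l) * Rz (β k)) d) 1 0) • f1 l := by
    intro l
    rw [← Matrix.mulVec_mulVec, hkey l d, Matrix.mulVec_add, Matrix.mulVec_smul,
      Matrix.mulVec_smul, hRf0, hRf1]
    rw [smul_smul, smul_smul]
    congr 1 <;> rw [mul_comm]
  have hquol : ∀ l, Complex.exp (-(β 0 : ℂ) * Complex.I)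
      * (orderedProd (fun k => Wm (c l) * Rz (α k) * Wm (c l) * Rz (β k)) d) 0 0
      = P.eval ((lam l : ℂ)) := by
    intro l
    have hc : c l = (Real.cos (θl l / 2) : ℂ) := by
      rw [hcosθ l]
    have h1 := (prod_rel (θl l) α β d).1
    rw [hc]
    rw [h1]
    have h2 := hP (θl l)
    rw [Matrix.mul_apply, Fin.sum_univ_two] at h2
    have hz0 : Rz (β 0) 0 0 = Complex.exp (-(β 0 : ℂ) * Complex.I) := by simp [Rz]
    have hz1 : Rz (β 0) 0 1 = 0 := by simp [Rz]
    rw [hz0, hz1, zero_mul, add_zero] at h2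
    rw [h2, hcosθ l]
  calc star v ⬝ᵥ ((RzI (β 0) * orderedProd Cecho d) *ᵥ v)
      = ∑ l : Fin n, ov l * (star v ⬝ᵥ ((RzI (β 0) * orderedProd Cecho d) *ᵥ f0 l)) := by
        rw [hvsum]
        rw [show (RzI (β 0) * orderedProd Cecho d) *ᵥ (∑ l : Fin n, ov l • f0 l)
            = ∑ l : Fin n, ov l • ((RzI (β 0) * orderedProd Cecho d) *ᵥ f0 l) by
          rw [mulVec_sumv]
          apply Finset.sum_congr rfl
          intro l _
          rw [Matrix.mulVec_smul]]
        rw [dotProduct_sumv]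
        apply Finset.sum_congr rfl
        intro l _
        rw [dotProduct_smul]
        simp
    _ = ∑ l : Fin n, (‖ov l‖ ^ 2 : ℂ) * P.eval ((lam l : ℂ)) := by
        apply Finset.sum_congr rfl
        intro l _
        have hnorm : ov l * (starRingEnd ℂ) (ov l) = (‖ov l‖ ^ 2 : ℂ) := by
          rw [Complex.mul_conj, Complex.normSq_eq_norm_sq]
          push_cast
          ring
        rw [hM l, dotProduct_add, dotProduct_smul, dotProduct_smul, hvf0, hvf1,
          smul_eq_mul, smul_eq_mul, mul_zero, add_zero, hquol l]
        linear_combination P.eval ((lam l : ℂ)) * hnorm
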